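/- arXiv:2312.13147 — 5 statements merged into one kernel-verified Lean document; each statement's English description precedes it below -/
import Mathlib

section
/- Let M₀ ⊆ ℝ^D, let z, z₀ ∈ ℝ^D, let x₀ ∈ M₀ and x ∈ M₀, and let α' > 0. Assume that for all y ∈ M₀: ‖y - z‖² ≥ ‖x - z‖² + α'‖y - x‖², and that ‖x - z₀‖² ≥ ‖x₀ - z₀‖² + α'‖x₀ - x‖² (taking y = x, base point x₀, center z₀) and ‖x₀ - z‖² ≥ ‖x - z‖² + α'‖x₀ - x‖². Then ‖x - x₀‖ ≤ (1/α')·‖z - z₀‖. -/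
/-- Algebraic core of the Lipschitz-continuity-of-projection lemma. -/
theorem stmt_3 {D : ℕ} (M₀ : Set (EuclideanSpace ℝ (Fin D)))
    (z z₀ x₀ x : EuclideanSpace ℝ (Fin D)) (hx₀ : x₀ ∈ M₀) (hx : x ∈ M₀)
    (α' : ℝ) (hα' : 0 < α')
    (h1 : ∀ y ∈ M₀, ‖x - z‖ ^ 2 + α' * ‖y - x‖ ^ 2 ≤ ‖y - z‖ ^ 2)
    (h2 : ‖x₀ - z₀‖ ^ 2 + α' * ‖x₀ - x‖ ^ 2 ≤ ‖x - z₀‖ ^ 2)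
    (h3 : ‖x - z‖ ^ 2 + α' * ‖x₀ - x‖ ^ 2 ≤ ‖x₀ - z‖ ^ 2) :
    ‖x - x₀‖ ≤ (1 / α') * ‖z - z₀‖ := by
  have e : ∀ a b : EuclideanSpace ℝ (Fin D),
      ‖a - b‖ ^ 2 = ‖a‖ ^ 2 - 2 * inner ℝ a b + ‖b‖ ^ 2 := fun a b => by
    rw [norm_sub_sq_real]
  have hn : ‖x₀ - x‖ = ‖x - x₀‖ := norm_sub_rev _ _
  have key : α' * ‖x - x₀‖ ^ 2 ≤ inner ℝ (x - x₀) (z - z₀) := by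
    have hi : (inner ℝ (x - x₀) (z - z₀) : ℝ)
        = inner ℝ x z - inner ℝ x z₀ - inner ℝ x₀ z + inner ℝ x₀ z₀ := by
      simp [inner_sub_left, inner_sub_right]; ring
    rw [hn] at h2 h3
    simp only [e] at h2 h3 ⊢
    nlinarith [h2, h3, hi]
  have hcs : (inner ℝ (x - x₀) (z - z₀) : ℝ) ≤ ‖x - x₀‖ * ‖z - z₀‖ :=
    real_inner_le_norm _ _
  rcases eq_or_lt_of_le (norm_nonneg (x - x₀)) with h0 | h0
  · rw [← h0]
    positivity
  · rw [one_div, ← div_eq_inv_mul, le_div_iff₀ hα']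
    nlinarith
end

section
/- Let M ⊆ ℝ^D be a compact set contained in a set with convex hull K = Conv(M), with diam(M) > 0. For x ∈ ℝ^D with d(x, K) ≥ L for some L > 0, any two points y₁, y₂ ∈ π_M(x) satisfy ‖y₁ − y₂‖ ≤ diam(M), and hence the center m of the smallest enclosing ball of π_M(x) satisfies ‖x − m‖ ≥ sqrt(L² − diam(M)²/2) wherever L² ≥ diam(M)²/2; consequently the generalized gradient norm ‖∇d_M(x)‖ = ‖x − m‖ / d(x,M) is at least sqrt(L² − diam(M)²/2) / (L + diam(M)) whenever d(x, Conv(M)) = L and L² ≥ diam(M)²/2. -/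
/-- Projections of a far-away point `x` lie within `diam M` of each other; the center `m`
of their smallest enclosing ball is far from `x`, and the generalized gradient norm of the
distance function at `x` is bounded below. -/
theorem stmt_6 {D : ℕ} (M : Set (EuclideanSpace ℝ (Fin D))) (hM : IsCompact M)
    (hMne : M.Nonempty) (hdiam : 0 < Metric.diam M)
    (x c : EuclideanSpace ℝ (Fin D)) (L r : ℝ) (hL : 0 < L)
    (hx : L ≤ Metric.infDist x (convexHull ℝ M))
    (hc : ∀ y ∈ {y | y ∈ M ∧ dist y x = Metric.infDist x M}, dist y c ≤ r)
    (hcmin : ∀ (c' : EuclideanSpace ℝ (Fin D)) (r' : ℝ),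
      (∀ y ∈ {y | y ∈ M ∧ dist y x = Metric.infDist x M}, dist y c' ≤ r') → r ≤ r') :
    (∀ y₁ ∈ {y | y ∈ M ∧ dist y x = Metric.infDist x M},
      ∀ y₂ ∈ {y | y ∈ M ∧ dist y x = Metric.infDist x M},
        dist y₁ y₂ ≤ Metric.diam M) ∧
    (Metric.diam M ^ 2 / 2 ≤ L ^ 2 →
      Real.sqrt (L ^ 2 - Metric.diam M ^ 2 / 2) ≤ dist x c) ∧
    (Metric.infDist x (convexHull ℝ M) = L → Metric.diam M ^ 2 / 2 ≤ L ^ 2 →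
      Real.sqrt (L ^ 2 - Metric.diam M ^ 2 / 2) / (L + Metric.diam M) ≤
        dist x c / Metric.infDist x M) := by
  classical
  set σ : Set (EuclideanSpace ℝ (Fin D)) :=
    {y | y ∈ M ∧ dist y x = Metric.infDist x M} with hσdef
  have hMK : M ⊆ convexHull ℝ M := subset_convexHull ℝ M
  have hLM : L ≤ Metric.infDist x M :=
    hx.trans (Metric.infDist_le_infDist_of_subset hMK hMne)
  obtain ⟨y₀, hy₀M, hy₀⟩ := hM.exists_infDist_eq_dist hMne x
  have hy₀σ : y₀ ∈ σ := ⟨hy₀M, by rw [dist_comm]; exact hy₀.symm⟩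
  have hσM : σ ⊆ M := fun y hy => hy.1
  have hσc : IsCompact σ := by
    have h : σ = M ∩ {y | dist y x = Metric.infDist x M} := rfl
    rw [h]
    exact hM.inter_right (isClosed_eq (continuous_id.dist continuous_const) continuous_const)
  -- the center `c` lies in the convex hull of `σ`, hence of `M`
  have hKconv : Convex ℝ (closure (convexHull ℝ σ)) := (convex_convexHull ℝ σ).closure
  obtain ⟨p, hpK, hp⟩ := exists_norm_eq_iInf_of_complete_convex
    ⟨y₀, subset_closure (subset_convexHull ℝ σ hy₀σ)⟩ isClosed_closure.isComplete hKconv c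
  have hobt := (norm_eq_iInf_iff_real_inner_le_zero hKconv hpK).mp hp
  have hr0 : 0 ≤ r := dist_nonneg.trans (hc y₀ hy₀σ)
  set δ := ‖c - p‖ with hδ
  have key : ∀ y ∈ σ, ‖y - p‖ ^ 2 + δ ^ 2 ≤ r ^ 2 := by
    intro y hy
    have h1 : inner ℝ (c - p) (y - p) ≤ (0 : ℝ) :=
      hobt _ (subset_closure (subset_convexHull ℝ σ hy))
    have h2 : ‖y - c‖ ≤ r := by rw [← dist_eq_norm]; exact hc y hy
    have h3 : ‖y - c‖ ^ 2 ≤ r ^ 2 := pow_le_pow_left₀ (norm_nonneg _) h2 2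
    have h4 : y - c = (y - p) - (c - p) := by abel
    have h5 : ‖y - c‖ ^ 2 = ‖y - p‖ ^ 2 - 2 * inner ℝ (y - p) (c - p) + δ ^ 2 := by
      rw [h4, hδ]; exact norm_sub_sq_real _ _
    have h6 : inner ℝ (y - p) (c - p) ≤ (0 : ℝ) := by rw [real_inner_comm]; exact h1
    nlinarith
  have hδ0 : c = p := by
    have h0 : ‖y₀ - p‖ ^ 2 + δ ^ 2 ≤ r ^ 2 := key y₀ hy₀σ
    have hnn : 0 ≤ r ^ 2 - δ ^ 2 := by nlinarith [sq_nonneg ‖y₀ - p‖]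
    have hrle : r ≤ Real.sqrt (r ^ 2 - δ ^ 2) := by
      apply hcmin p
      intro y hy
      have h1 : dist y p ^ 2 ≤ r ^ 2 - δ ^ 2 := by
        have := key y hy
        rw [dist_eq_norm]
        linarith
      have h2 : dist y p ≤ Real.sqrt (dist y p ^ 2) := by
        rw [Real.sqrt_sq dist_nonneg]
      exact h2.trans (Real.sqrt_le_sqrt h1)
    have hsq : r ^ 2 ≤ r ^ 2 - δ ^ 2 := by
      have h1 : Real.sqrt (r ^ 2 - δ ^ 2) ^ 2 = r ^ 2 - δ ^ 2 := Real.sq_sqrt hnn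
      nlinarith [Real.sqrt_nonneg (r ^ 2 - δ ^ 2)]
    have hδz : δ = 0 := by
      have h1 : δ ^ 2 ≤ 0 := by linarith
      have h2 : (0 : ℝ) ≤ δ := norm_nonneg _
      nlinarith
    have : c - p = 0 := by rwa [← norm_eq_zero]
    exact sub_eq_zero.mp this
  have hcK : c ∈ closure (convexHull ℝ M) := by
    rw [hδ0]
    exact closure_mono (convexHull_mono hσM) hpK
  have hLc : L ≤ dist x c := by
    have h1 : Metric.infDist x (closure (convexHull ℝ M)) ≤ dist x c :=
      Metric.infDist_le_dist_of_mem hcK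
    rw [Metric.infDist_closure] at h1
    exact hx.trans h1
  have hpart2 : Metric.diam M ^ 2 / 2 ≤ L ^ 2 →
      Real.sqrt (L ^ 2 - Metric.diam M ^ 2 / 2) ≤ dist x c := by
    intro h
    have h1 : Real.sqrt (L ^ 2 - Metric.diam M ^ 2 / 2) ≤ Real.sqrt (L ^ 2) :=
      Real.sqrt_le_sqrt (by nlinarith [sq_nonneg (Metric.diam M)])
    rw [Real.sqrt_sq hL.le] at h1
    exact h1.trans hLc
  refine ⟨fun y₁ h₁ y₂ h₂ => Metric.dist_le_diam_of_mem hM.isBounded h₁.1 h₂.1, hpart2, ?_⟩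
  intro hLeq h
  obtain ⟨q, hqK, hq⟩ := isClosed_closure.exists_infDist_eq_dist
    ((hMne.mono hMK).mono subset_closure) x
  have hqL : dist x q = L := by
    rw [← hq, Metric.infDist_closure, hLeq]
  have hball : convexHull ℝ M ⊆ Metric.closedBall y₀ (Metric.diam M) :=
    convexHull_min
      (fun m hm => Metric.mem_closedBall.mpr (Metric.dist_le_diam_of_mem hM.isBounded hm hy₀M))
      (convex_closedBall _ _)
  have hqy₀ : dist q y₀ ≤ Metric.diam M :=
    closure_minimal hball Metric.isClosed_closedBall hqK
  have hdenom : Metric.infDist x M ≤ L + Metric.diam M := by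
    calc Metric.infDist x M ≤ dist x y₀ := Metric.infDist_le_dist_of_mem hy₀M
    _ ≤ dist x q + dist q y₀ := dist_triangle _ _ _
    _ ≤ L + Metric.diam M := by rw [hqL]; linarith
  exact div_le_div₀ dist_nonneg (hpart2 h) (lt_of_lt_of_le hL hLM) hdenom
end

section
/- Let z, x₁, …, x_s ∈ ℝ^D be such that the x_i are pairwise distinct and z lies in the convex hull of {x₁,…,x_s}, and suppose z − x_j ∈ E := span{x_{j₁} − x_{j₂} : 1 ≤ j₁, j₂ ≤ s} for all j. If points y_j satisfy ‖y_j − (x_j + h)‖ ≤ L‖h‖ and |⟨z − x_j, x_j + h − y_j⟩ − ⟨z − x_j, h⟩| ≤ C₁‖h‖² for all j and some h ∈ E^⊥, and additionally ‖y_{j₁} − w‖ = ‖y_{j₂} − w‖ for all j₁, j₂ for some point w = z + h + e with e ∈ ℝ^D, then the projection of e onto E satisfies ‖π_E(e)‖ ≤ C₄(‖h‖ + ‖e‖)² for some constant C₄ depending only on the geometry of the simplex with vertices x₁,…,x_s, on L, and on C₁. -/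
lemma span_proj_bound' {D : ℕ} {ι : Type*} [Fintype ι]
    (v : ι → EuclideanSpace ℝ (Fin D)) (E : Submodule ℝ (EuclideanSpace ℝ (Fin D)))
    (hE : E = Submodule.span ℝ (Set.range v)) :
    ∃ c > (0:ℝ), ∀ u ∈ E, ‖u‖ ≤ c * ∑ p, |(inner ℝ (v p) u : ℝ)| := by
  classical
  haveI : FiniteDimensional ℝ E := inferInstance
  set b := stdOrthonormalBasis ℝ E with hb
  have hmem : ∀ i, ((b i : EuclideanSpace ℝ (Fin D))) ∈ Submodule.span ℝ (Set.range v) := by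
    intro i; rw [← hE]; exact (b i).2
  have hrep : ∀ i, ∃ a : ι → ℝ, ∑ p, a p • v p = (b i : EuclideanSpace ℝ (Fin D)) := by
    intro i
    exact (Submodule.mem_span_range_iff_exists_fun ℝ).mp (hmem i)
  choose a ha using hrep
  refine ⟨1 + ∑ i, ∑ p, |a i p|, by positivity, ?_⟩
  intro u hu
  set u' : E := ⟨u, hu⟩ with hu'
  set S := ∑ p, |(inner ℝ (v p) u : ℝ)| with hS
  have hSnn : 0 ≤ S := Finset.sum_nonneg fun p _ => abs_nonneg _
  have hterm : ∀ p, |(inner ℝ (v p) u : ℝ)| ≤ S := by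
    intro p
    exact Finset.single_le_sum (f := fun p => |(inner ℝ (v p) u : ℝ)|)
      (fun q _ => abs_nonneg _) (Finset.mem_univ p)
  have hexp : ∀ i, (inner ℝ (b i) u' : ℝ) = ∑ p, a i p * (inner ℝ (v p) u : ℝ) := by
    intro i
    have : (inner ℝ (b i) u' : ℝ) = (inner ℝ ((b i : EuclideanSpace ℝ (Fin D))) u : ℝ) := rfl
    rw [this, ← ha i, sum_inner]
    simp [real_inner_smul_left, Finset.mul_sum, mul_assoc]
  have hnorm : ‖u‖ ≤ ∑ i, |(inner ℝ (b i) u' : ℝ)| := by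
    have h1 : u' = ∑ i, (inner ℝ (b i) u' : ℝ) • b i := by
      conv_lhs => rw [← b.sum_repr u']
      congr 1; ext i; rw [b.repr_apply_apply]
    have h2 : ‖u‖ = ‖u'‖ := rfl
    rw [h2]
    calc ‖u'‖ = ‖∑ i, (inner ℝ (b i) u' : ℝ) • b i‖ := by rw [← h1]
      _ ≤ ∑ i, ‖(inner ℝ (b i) u' : ℝ) • b i‖ := norm_sum_le _ _
      _ = ∑ i, |(inner ℝ (b i) u' : ℝ)| := by
          refine Finset.sum_congr rfl fun i _ => ?_
          rw [norm_smul, (stdOrthonormalBasis ℝ E).orthonormal.1 i]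
          simp [Real.norm_eq_abs]
  calc ‖u‖ ≤ ∑ i, |(inner ℝ (b i) u' : ℝ)| := hnorm
    _ ≤ ∑ i, ∑ p, |a i p| * S := by
        refine Finset.sum_le_sum fun i _ => ?_
        rw [hexp i]
        calc |∑ p, a i p * (inner ℝ (v p) u : ℝ)| ≤ ∑ p, |a i p * (inner ℝ (v p) u : ℝ)| :=
              Finset.abs_sum_le_sum_abs _ _
          _ ≤ ∑ p, |a i p| * S := by
              refine Finset.sum_le_sum fun p _ => ?_
              rw [abs_mul]
              exact mul_le_mul_of_nonneg_left (hterm p) (abs_nonneg _)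
    _ = (∑ i, ∑ p, |a i p|) * S := by rw [Finset.sum_mul]; simp [Finset.sum_mul]
    _ ≤ (1 + ∑ i, ∑ p, |a i p|) * S := by
        have : (0:ℝ) ≤ ∑ i, ∑ p, |a i p| := by positivity
        nlinarith

set_option maxHeartbeats 1600000 in
/-- Near-critical points with nearly equal distances to perturbed projections are nearly
perpendicular to the span `E` of the differences of the projections: quantitative bound on
`‖π_E(e)‖`. -/
theorem stmt_10 {D s : ℕ} (x : Fin s → EuclideanSpace ℝ (Fin D))
    (z : EuclideanSpace ℝ (Fin D)) (hinj : Function.Injective x)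
    (hz : z ∈ convexHull ℝ (Set.range x))
    (E : Submodule ℝ (EuclideanSpace ℝ (Fin D)))
    (hE : E = Submodule.span ℝ {v | ∃ j₁ j₂, v = x j₁ - x j₂})
    (hzE : ∀ j, z - x j ∈ E) (L C₁ : ℝ) (hL : 0 < L) (hC₁ : 0 < C₁) :
    ∃ C₄ > (0 : ℝ), ∀ h : EuclideanSpace ℝ (Fin D), h ∈ Eᗮ →
      ∀ (y : Fin s → EuclideanSpace ℝ (Fin D)) (e : EuclideanSpace ℝ (Fin D)),
        (∀ j, ‖y j - (x j + h)‖ ≤ L * ‖h‖) →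
        (∀ j, |(inner ℝ (z - x j) (x j + h - y j) : ℝ) - (inner ℝ (z - x j) h : ℝ)| ≤
          C₁ * ‖h‖ ^ 2) →
        (∀ j₁ j₂, ‖y j₁ - (z + h + e)‖ = ‖y j₂ - (z + h + e)‖) →
        ‖(Submodule.orthogonalProjectionOnto E e : EuclideanSpace ℝ (Fin D))‖ ≤
          C₄ * (‖h‖ + ‖e‖) ^ 2 := by
  classical
  -- s is positive since the convex hull is nonempty
  have hsne : (Set.range x).Nonempty := by
    by_contra hcon
    rw [Set.not_nonempty_iff_eq_empty] at hcon
    rw [hcon, convexHull_empty] at hz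
    exact hz
  haveI : Nonempty (Fin s) := by
    obtain ⟨_, j, _⟩ := hsne; exact ⟨j⟩
  set v : Fin s × Fin s → EuclideanSpace ℝ (Fin D) := fun p => x p.1 - x p.2 with hv
  have hrange : {w : EuclideanSpace ℝ (Fin D) | ∃ j₁ j₂, w = x j₁ - x j₂} = Set.range v := by
    ext w
    constructor
    · rintro ⟨j₁, j₂, rfl⟩; exact ⟨(j₁, j₂), rfl⟩
    · rintro ⟨⟨j₁, j₂⟩, rfl⟩; exact ⟨j₁, j₂, rfl⟩
  obtain ⟨c, hc, hcb⟩ := span_proj_bound' v E (by rw [hE, hrange])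
  have hvE : ∀ p, v p ∈ E := by
    intro p; rw [hE]; exact Submodule.subset_span ⟨p.1, p.2, rfl⟩
  set M : ℝ := max L 1 with hM
  set K : ℝ := M ^ 2 + 2 * C₁ with hK
  have hKpos : 0 < K := by
    have : (1:ℝ) ≤ M := le_max_right _ _
    nlinarith
  set Dp : Fin s × Fin s → ℝ := fun p => ‖z - x p.1‖ ^ 2 - ‖z - x p.2‖ ^ 2 with hDp
  set g : Fin s × Fin s → ℝ :=
    fun p => if Dp p = 0 then 1 else |Dp p| / (2 * ‖v p‖ + 2 * K + 1) with hg
  have hgpos : ∀ p, 0 < g p := by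
    intro p
    simp only [hg]
    split_ifs with hd
    · exact one_pos
    · apply div_pos (abs_pos.mpr hd)
      positivity
  set t₀ : ℝ := min 1 (Finset.univ.inf' Finset.univ_nonempty g) with ht₀def
  have ht₀pos : 0 < t₀ := by
    refine lt_min one_pos ?_
    rw [Finset.lt_inf'_iff]
    exact fun p _ => hgpos p
  have ht₀le : ∀ p, t₀ ≤ g p := fun p =>
    le_trans (min_le_right _ _) (Finset.inf'_le g (Finset.mem_univ p))
  have ht₀1 : t₀ ≤ 1 := min_le_left _ _
  set N : ℝ := (Fintype.card (Fin s × Fin s) : ℝ) with hN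
  refine ⟨1 / t₀ + c * N * K + 1, by positivity, ?_⟩
  intro h hh y e hy hip heq
  set t : ℝ := ‖h‖ + ‖e‖ with ht
  have htnn : 0 ≤ t := by positivity
  set u : Fin s → EuclideanSpace ℝ (Fin D) := fun j => y j - (x j + h) with hu
  set ρ : Fin s → ℝ := fun j =>
    ‖u j - e‖ ^ 2 - 2 * (inner ℝ (z - x j) (u j) : ℝ) with hρ
  -- expansion of the squared distance
  have expand : ∀ j, ‖y j - (z + h + e)‖ ^ 2 =
      ‖z - x j‖ ^ 2 + 2 * (inner ℝ (z - x j) e : ℝ) + ρ j := by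
    intro j
    have hyj : y j - (z + h + e) = (x j - z) + (u j - e) := by
      simp only [hu]; abel
    rw [hyj]
    have := norm_add_sq_real (x j - z) (u j - e)
    rw [this]
    have h1 : ‖x j - z‖ = ‖z - x j‖ := norm_sub_rev _ _
    have h2 : (inner ℝ (x j - z) (u j - e) : ℝ) =
        (inner ℝ (z - x j) e : ℝ) - (inner ℝ (z - x j) (u j) : ℝ) := by
      rw [← neg_sub z (x j), inner_neg_left, inner_sub_right]
      ring
    rw [h1, h2, hρ]
    ring
  -- bound on ρ
  have hinner0 : ∀ j, (inner ℝ (z - x j) h : ℝ) = 0 := fun j =>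
    (Submodule.mem_orthogonal E h).mp hh (z - x j) (hzE j)
  have hρbound : ∀ j, |ρ j| ≤ K * t ^ 2 := by
    intro j
    have h1 : ‖u j - e‖ ≤ M * t := by
      calc ‖u j - e‖ ≤ ‖u j‖ + ‖e‖ := norm_sub_le _ _
        _ ≤ L * ‖h‖ + ‖e‖ := by have := hy j; simp only [hu]; linarith
        _ ≤ M * ‖h‖ + M * ‖e‖ := by
            have hL1 : L ≤ M := le_max_left _ _
            have h1M : (1:ℝ) ≤ M := le_max_right _ _
            have := norm_nonneg h; have := norm_nonneg e
            nlinarith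
        _ = M * t := by rw [ht]; ring
    have h1' : ‖u j - e‖ ^ 2 ≤ M ^ 2 * t ^ 2 := by
      have := norm_nonneg (u j - e)
      nlinarith
    have h2 : |(inner ℝ (z - x j) (u j) : ℝ)| ≤ C₁ * ‖h‖ ^ 2 := by
      have := hip j
      rw [hinner0 j] at this
      have heq2 : (inner ℝ (z - x j) (x j + h - y j) : ℝ) = -(inner ℝ (z - x j) (u j) : ℝ) := by
        have : x j + h - y j = -(u j) := by simp only [hu]; abel
        rw [this, inner_neg_right]
      rw [heq2, sub_zero, abs_neg] at this
      exact this
    have h3 : C₁ * ‖h‖ ^ 2 ≤ C₁ * t ^ 2 := by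
      have hh1 : ‖h‖ ≤ t := by rw [ht]; have := norm_nonneg e; linarith
      have hhn := norm_nonneg h
      have := mul_le_mul hh1 hh1 hhn htnn
      nlinarith
    have h5 : |(inner ℝ (z - x j) (u j) : ℝ)| ≤ C₁ * t ^ 2 := le_trans h2 h3
    obtain ⟨h6a, h6b⟩ := abs_le.mp h5
    have h7 : (0:ℝ) ≤ ‖u j - e‖ ^ 2 := by positivity
    simp only [hρ, hK]
    rw [abs_le]
    constructor <;> linarith
  -- key pairwise estimate
  have key : ∀ p : Fin s × Fin s, |2 * (inner ℝ (v p) e : ℝ) - Dp p| ≤ 2 * K * t ^ 2 := by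
    rintro ⟨j₁, j₂⟩
    have hw := heq j₁ j₂
    have hw2 : ‖y j₁ - (z + h + e)‖ ^ 2 = ‖y j₂ - (z + h + e)‖ ^ 2 := by rw [hw]
    rw [expand j₁, expand j₂] at hw2
    have hvp : (inner ℝ (v (j₁, j₂)) e : ℝ) =
        (inner ℝ (z - x j₂) e : ℝ) - (inner ℝ (z - x j₁) e : ℝ) := by
      simp only [hv]
      rw [show x j₁ - x j₂ = (z - x j₂) - (z - x j₁) by abel, inner_sub_left]
    obtain ⟨hb1a, hb1b⟩ := abs_le.mp (hρbound j₁)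
    obtain ⟨hb2a, hb2b⟩ := abs_le.mp (hρbound j₂)
    have hkey : 2 * (inner ℝ (v (j₁, j₂)) e : ℝ) - Dp (j₁, j₂) = ρ j₁ - ρ j₂ := by
      rw [hvp]
      simp only [hDp]
      linarith
    rw [hkey, abs_le]
    constructor <;> linarith
  by_cases hD : ∀ p, Dp p = 0
  · -- equidistant case: use the spanning bound
    have hinner : ∀ p, |(inner ℝ (v p) e : ℝ)| ≤ K * t ^ 2 := by
      intro p
      have := key p
      rw [hD p, sub_zero] at this
      rw [abs_mul, abs_two] at this
      linarith [abs_nonneg (inner ℝ (v p) e : ℝ)]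
    set π : EuclideanSpace ℝ (Fin D) := (Submodule.orthogonalProjectionOnto E e : EuclideanSpace ℝ (Fin D))
      with hπ
    have hπE : π ∈ E := (Submodule.orthogonalProjectionOnto E e).2
    have hπinner : ∀ p, (inner ℝ (v p) π : ℝ) = (inner ℝ (v p) e : ℝ) := by
      intro p
      have horth : e - π ∈ Eᗮ := E.sub_starProjection_mem_orthogonal e
      have := (Submodule.mem_orthogonal E (e - π)).mp horth (v p) (hvE p)
      rw [inner_sub_right] at this
      linarith
    have hbound := hcb π hπE
    have hsum : ∑ p, |(inner ℝ (v p) π : ℝ)| ≤ N * (K * t ^ 2) := by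
      calc ∑ p, |(inner ℝ (v p) π : ℝ)| ≤ ∑ _p : Fin s × Fin s, K * t ^ 2 := by
            refine Finset.sum_le_sum fun p _ => ?_
            rw [hπinner p]; exact hinner p
        _ = N * (K * t ^ 2) := by
            rw [Finset.sum_const, Finset.card_univ, nsmul_eq_mul, hN]
    have hKt : (0:ℝ) ≤ K * t ^ 2 := by positivity
    calc ‖π‖ ≤ c * ∑ p, |(inner ℝ (v p) π : ℝ)| := hbound
      _ ≤ c * (N * (K * t ^ 2)) := by
          exact mul_le_mul_of_nonneg_left hsum (le_of_lt hc)
      _ ≤ (1 / t₀ + c * N * K + 1) * t ^ 2 := by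
          have h1 : 0 < 1 / t₀ := by positivity
          nlinarith [mul_nonneg h1.le (sq_nonneg t), sq_nonneg t]
  · -- some pair has different distances to z: small t is impossible
    rw [not_forall] at hD
    obtain ⟨p₀, hp₀⟩ := hD
    have htt : t₀ ≤ t := by
      by_contra hlt
      push_neg at hlt
      have hk := abs_le.mp (key p₀)
      have hcs : |(inner ℝ (v p₀) e : ℝ)| ≤ ‖v p₀‖ * t := by
        calc |(inner ℝ (v p₀) e : ℝ)| ≤ ‖v p₀‖ * ‖e‖ := abs_real_inner_le_norm _ _
          _ ≤ ‖v p₀‖ * t := by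
              have := norm_nonneg (v p₀); have := norm_nonneg h
              rw [ht]; nlinarith
      have hcs' := abs_le.mp hcs
      have hA : 0 < |Dp p₀| := abs_pos.mpr hp₀
      have hgp : g p₀ = |Dp p₀| / (2 * ‖v p₀‖ + 2 * K + 1) := by
        simp only [hg, if_neg hp₀]
      have ht1 : t < 1 := lt_of_lt_of_le hlt ht₀1
      have ht2 : t < |Dp p₀| / (2 * ‖v p₀‖ + 2 * K + 1) := by
        rw [← hgp]; exact lt_of_lt_of_le hlt (ht₀le p₀)
      have hden : (0:ℝ) < 2 * ‖v p₀‖ + 2 * K + 1 := by positivity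
      rw [lt_div_iff₀ hden] at ht2
      have hvn := norm_nonneg (v p₀)
      have ht2' : t ^ 2 ≤ t := by nlinarith [mul_le_mul_of_nonneg_left ht1.le htnn]
      have hKt : K * t ^ 2 ≤ K * t := mul_le_mul_of_nonneg_left ht2' hKpos.le
      rcases abs_cases (Dp p₀) with ⟨habs, _⟩ | ⟨habs, _⟩ <;>
        linarith [hk.1, hk.2, hcs'.1, hcs'.2]
    -- then ‖π e‖ ≤ ‖e‖ ≤ t ≤ t²/t₀
    have hπnorm : ‖(Submodule.orthogonalProjectionOnto E e : EuclideanSpace ℝ (Fin D))‖ ≤ ‖e‖ := by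
      have := Submodule.orthogonalProjectionOnto_norm_le E
      calc ‖(Submodule.orthogonalProjectionOnto E e : EuclideanSpace ℝ (Fin D))‖
          ≤ ‖(Submodule.orthogonalProjectionOnto E : EuclideanSpace ℝ (Fin D) →L[ℝ] E)‖ * ‖e‖ :=
            (Submodule.orthogonalProjectionOnto E).le_opNorm e
        _ ≤ 1 * ‖e‖ := by
            exact mul_le_mul_of_nonneg_right this (norm_nonneg e)
        _ = ‖e‖ := one_mul _
    have het : ‖e‖ ≤ t := by rw [ht]; have := norm_nonneg h; linarith
    have h1 : t ≤ t ^ 2 / t₀ := by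
      rw [le_div_iff₀ ht₀pos, pow_two]
      exact mul_le_mul_of_nonneg_left htt htnn
    calc ‖(Submodule.orthogonalProjectionOnto E e : EuclideanSpace ℝ (Fin D))‖ ≤ t := le_trans hπnorm het
      _ ≤ (1 / t₀) * t ^ 2 := by rw [one_div, ← div_eq_inv_mul]; exact h1
      _ ≤ (1 / t₀ + c * N * K + 1) * t ^ 2 := by
          have h2 : (0:ℝ) ≤ c * N * K := by positivity
          have h3 : 1 / t₀ ≤ 1 / t₀ + c * N * K + 1 := by
            calc 1 / t₀ = 1 / t₀ + 0 := (add_zero _).symm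
              _ ≤ 1 / t₀ + (c * N * K + 1) := add_le_add le_rfl (by positivity)
              _ = 1 / t₀ + c * N * K + 1 := (add_assoc _ _ _).symm
          exact mul_le_mul_of_nonneg_right h3 (sq_nonneg t)
end

section
/- Let M ⊆ ℝ^D be a compact C² submanifold with reach τ(M) > 0, let A ⊆ M with Hausdorff distance d_H(A, M) ≤ ε, and let z ∈ ℝ^D be a critical point of the distance function d_A with d(z, A) ≤ 4ε. Assume ε < τ(M)/8. Then d(z, M) ≤ 10ε²/τ(M). -/
open Metric Set
set_option maxHeartbeats 1000000
open scoped RealInnerProductSpace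

/-- From a point in the convex hull, for any direction there is a hull-generator on
the "right side". -/
lemma halfspace_pick {E : Type*} [NormedAddCommGroup E] [InnerProductSpace ℝ E]
    (Y : Set E) (z : E) (hz : z ∈ convexHull ℝ Y) (v : E) :
    ∃ y ∈ Y, ⟪v, z - y⟫ ≤ 0 := by
  by_contra h
  push_neg at h
  have hlin : IsLinearMap ℝ (fun u : E => ⟪v, u⟫) :=
    ⟨fun a b => inner_add_right _ _ _, fun c a => real_inner_smul_right _ _ _⟩
  have hsub : Y ⊆ {u : E | ⟪v, u⟫ < ⟪v, z⟫} := by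
    intro y hy
    have h2 := h y hy
    rw [inner_sub_right] at h2
    simpa [Set.mem_setOf_eq] using sub_pos.mp h2
  have := convexHull_min hsub (convex_halfSpace_lt hlin _) hz
  simp at this

lemma escape {D : ℕ} (M : Set (EuclideanSpace ℝ (Fin D))) (hM : IsCompact M)
    (hMne : M.Nonempty) (τ : ℝ)
    (hreach : ∀ x : EuclideanSpace ℝ (Fin D), Metric.infDist x M < τ →
      ∃! y, y ∈ M ∧ dist x y = Metric.infDist x M)
    (z : EuclideanSpace ℝ (Fin D)) (hz : 0 < Metric.infDist z M)
    (c R : ℝ) (hc0 : 0 < c) (hc1 : c < 1) (hR : 0 ≤ R)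
    (hRτ : Metric.infDist z M + R < τ) :
    ∃ x, dist x z ≤ R ∧ Metric.infDist z M + c * R ≤ Metric.infDist x M := by
  set δ := Metric.infDist z M with hδdef
  set F : EuclideanSpace ℝ (Fin D) → ℝ := fun x => Metric.infDist x M - c * dist x z with hF
  have hFcont : Continuous F :=
    (Metric.continuous_infDist_pt M).sub (continuous_const.mul (continuous_id.dist continuous_const))
  obtain ⟨x, hxball, hxmax⟩ :=
    (isCompact_closedBall z R).exists_isMaxOn ⟨z, mem_closedBall_self hR⟩ hFcont.continuousOn
  by_cases hdone : δ + c * R ≤ Metric.infDist x M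
  · exact ⟨x, mem_closedBall.mp hxball, hdone⟩
  push_neg at hdone
  exfalso
  set m := Metric.infDist x M with hm
  have hFz : F z = δ := by simp [hF]; rfl
  have hFzx : δ ≤ F x := by
    have := hxmax (mem_closedBall_self hR)
    simpa [hFz] using this
  have hmδ : δ ≤ m := by
    have : c * dist x z ≥ 0 := mul_nonneg hc0.le dist_nonneg
    simp only [hF] at hFzx
    linarith
  have hm0 : 0 < m := lt_of_lt_of_le hz hmδ
  have hdxz : dist x z < R := by
    simp only [hF] at hFzx
    nlinarith [hFzx, hdone]
  have hmτ : m < τ := by nlinarith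
  obtain ⟨p, ⟨hpM, hpd⟩, hpuniq⟩ := hreach x hmτ
  set w := (m⁻¹) • (x - p) with hw
  have hnormxp : ‖x - p‖ = m := by rw [← dist_eq_norm]; exact hpd
  have hwnorm : ‖w‖ = 1 := by
    rw [hw, norm_smul, hnormxp, norm_inv, Real.norm_eq_abs, abs_of_pos hm0]
    field_simp
  have hwxp : ⟪w, x - p⟫ = m := by
    rw [hw, real_inner_smul_left, real_inner_self_eq_norm_sq, hnormxp]
    field_simp
  set c' := (1 + c) / 2 with hc'
  have hc'c : c < c' := by simp only [hc']; linarith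
  have hc'0 : 0 < c' := by simp only [hc']; linarith
  have hc'1 : c' < 1 := by simp only [hc']; linarith
  set b : EuclideanSpace ℝ (Fin D) → ℝ := fun q => ⟪w, x - q⟫ - m * c' with hb
  set e : EuclideanSpace ℝ (Fin D) → ℝ := fun q => dist x q ^ 2 - m ^ 2 with he
  have he0 : ∀ q ∈ M, 0 ≤ e q := by
    intro q hq
    have h1 : m ≤ dist x q := Metric.infDist_le_dist_of_mem hq
    have h2 : (0:ℝ) ≤ dist x q := dist_nonneg
    simp only [he]
    nlinarith
  have hbp : 0 < b p := by
    simp only [hb, hwxp]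
    nlinarith
  have hbcont : Continuous b :=
    ((continuous_const.inner (continuous_const.sub continuous_id)).sub continuous_const)
  set K := M ∩ {q | b q ≤ 0} with hK
  have hKcomp : IsCompact K := hM.inter_right (isClosed_le hbcont continuous_const)
  -- find h₀ > 0 such that for all q ∈ M, 0 < h ≤ h₀ implies 0 ≤ e q + 2*h*(b q)
  have hstep : ∃ h₀ > 0, ∀ q ∈ M, ∀ h : ℝ, 0 < h → h ≤ h₀ → 0 ≤ e q + 2 * h * b q := by
    rcases eq_empty_or_nonempty K with hKe | hKne
    · refine ⟨1, one_pos, fun q hq h hh _ => ?_⟩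
      have hbq : 0 < b q := by
        by_contra hc2
        push_neg at hc2
        exact (Set.eq_empty_iff_forall_notMem.mp hKe q) ⟨hq, hc2⟩
      have := he0 q hq
      nlinarith
    · have hecont : Continuous e := ((continuous_const.dist continuous_id).pow 2).sub continuous_const
      obtain ⟨q₀, hq₀K, hq₀min⟩ := hKcomp.exists_isMinOn hKne hecont.continuousOn
      obtain ⟨q₁, hq₁K, hq₁max⟩ := hKcomp.exists_isMaxOn hKne
        ((continuous_const.mul hbcont).continuousOn :
          ContinuousOn (fun q => -2 * b q) K)
      have he₀pos : 0 < e q₀ := by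
        rcases lt_or_eq_of_le (he0 q₀ hq₀K.1) with hlt | heq
        · exact hlt
        · exfalso
          have hdq : dist x q₀ = m := by
            have h1 : m ≤ dist x q₀ := Metric.infDist_le_dist_of_mem hq₀K.1
            have : dist x q₀ ^ 2 = m ^ 2 := by simp only [he] at heq; linarith
            nlinarith [dist_nonneg (x := x) (y := q₀)]
          have : q₀ = p := hpuniq q₀ ⟨hq₀K.1, hdq⟩
          rw [this] at hq₀K
          exact absurd hq₀K.2 (not_le.mpr hbp)
      set B := max (-2 * b q₁) 1 with hB
      have hBpos : 0 < B := lt_of_lt_of_le one_pos (le_max_right _ _)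
      refine ⟨e q₀ / B, div_pos he₀pos hBpos, fun q hq h hh hhle => ?_⟩
      rcases le_or_gt (b q) 0 with hbq | hbq
      · have hqK : q ∈ K := ⟨hq, hbq⟩
        have h1 : e q₀ ≤ e q := hq₀min hqK
        have h2 : -2 * b q ≤ -2 * b q₁ := hq₁max hqK
        have h3 : -2 * b q ≤ B := le_trans h2 (le_max_left _ _)
        have h4 : h * (-2 * b q) ≤ h * B := by
          apply mul_le_mul_of_nonneg_left h3 hh.le
        have h5 : h * B ≤ e q₀ := (le_div_iff₀ hBpos).mp hhle
        nlinarith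
      · have := he0 q hq
        nlinarith
  obtain ⟨h₀, hh₀pos, hstep⟩ := hstep
  set h := min h₀ (R - dist x z) with hhdef
  have hhpos : 0 < h := lt_min hh₀pos (by linarith)
  have hhh₀ : h ≤ h₀ := min_le_left _ _
  set x' := x + h • w with hx'
  have hdx'x : dist x' x = h := by
    simp only [hx', dist_eq_norm]
    have : x + h • w - x = h • w := by abel
    rw [this, norm_smul, hwnorm, Real.norm_eq_abs, abs_of_pos hhpos]
    ring
  have hx'ball : x' ∈ closedBall z R := by
    rw [mem_closedBall]
    calc dist x' z ≤ dist x' x + dist x z := dist_triangle _ _ _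
      _ = h + dist x z := by rw [hdx'x]
      _ ≤ (R - dist x z) + dist x z := by
          have := min_le_right h₀ (R - dist x z); linarith
      _ = R := by ring
  have hinf' : m + c' * h ≤ Metric.infDist x' M := by
    by_contra hcon
    push_neg at hcon
    rw [Metric.infDist_lt_iff hMne] at hcon
    obtain ⟨q, hq, hdq⟩ := hcon
    have hsq : (m + c' * h) ^ 2 ≤ dist x' q ^ 2 := by
      have hexp : dist x' q ^ 2 = ‖x - q‖ ^ 2 + 2 * (h * ⟪w, x - q⟫) + h ^ 2 := by
        rw [dist_eq_norm]
        have h1 : x' - q = (x - q) + h • w := by simp only [hx']; abel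
        rw [h1, norm_add_sq_real, real_inner_smul_right, real_inner_comm, norm_smul, hwnorm,
          Real.norm_eq_abs, abs_of_pos hhpos]
        ring
      have hE := hstep q hq h hhpos hhh₀
      simp only [he, hb] at hE
      have hdn : dist x q = ‖x - q‖ := dist_eq_norm _ _
      rw [hdn] at hE
      have hc2 : (0:ℝ) ≤ 1 - c' ^ 2 := by nlinarith [mul_pos (sub_pos.mpr hc'1) (show (0:ℝ) < 1 + c' by linarith)]
      have hq2 : (0:ℝ) ≤ (1 - c' ^ 2) * h ^ 2 := mul_nonneg hc2 (sq_nonneg h)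
      nlinarith [hq2]
    have h1 : 0 ≤ m + c' * h := by positivity
    nlinarith [dist_nonneg (x := x') (y := q), hdq]
  have hcontr : F x' ≤ F x := hxmax hx'ball
  have hFx' : F x + (c' - c) * h ≤ F x' := by
    simp only [hF]
    have hd' : dist x' z ≤ dist x z + h := by
      calc dist x' z ≤ dist x' x + dist x z := dist_triangle _ _ _
        _ = dist x z + h := by rw [hdx'x]; ring
    have : c * dist x' z ≤ c * (dist x z + h) := mul_le_mul_of_nonneg_left hd' hc0.le
    nlinarith [hinf']
  nlinarith [hcontr, hFx', mul_pos (sub_pos.mpr hc'c) hhpos]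

/-- A critical point of the distance to a sample `A ⊆ M` (`d_H(A,M) ≤ ε < τ/8`) that is
within `4ε` of `A` is within `10ε²/τ` of `M`, where `τ > 0` is (a lower bound on) the reach
of the compact set `M`. -/
theorem stmt_14 {D : ℕ} (M A : Set (EuclideanSpace ℝ (Fin D))) (hM : IsCompact M)
    (hMne : M.Nonempty) (hAM : A ⊆ M) (hAne : A.Nonempty)
    (τ ε : ℝ) (hτ : 0 < τ)
    (hreach : ∀ x : EuclideanSpace ℝ (Fin D), Metric.infDist x M < τ →
      ∃! y, y ∈ M ∧ dist x y = Metric.infDist x M)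
    (hH : Metric.hausdorffDist A M ≤ ε) (hε : ε < τ / 8)
    (z : EuclideanSpace ℝ (Fin D)) (hzA : z ∉ A)
    (hcrit : z ∈ convexHull ℝ {y | y ∈ A ∧ dist z y = Metric.infDist z A})
    (hclose : Metric.infDist z A ≤ 4 * ε) :
    Metric.infDist z M ≤ 10 * ε ^ 2 / τ := by
  have hε0 : 0 ≤ ε := le_trans Metric.hausdorffDist_nonneg hH
  set δ := Metric.infDist z M with hδdef
  set r := Metric.infDist z A with hrdef
  have hδr : δ ≤ r := Metric.infDist_le_infDist_of_subset hAM hAne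
  have hr4 : r ≤ 4 * ε := hclose
  rcases le_or_gt δ 0 with h0 | hδ0
  · exact le_trans h0 (by positivity)
  have hδτ : δ < τ := by linarith
  -- key inequality 2τδ ≤ r² + δ²
  have hkey : 2 * τ * δ ≤ r ^ 2 + δ ^ 2 := by
    have hstep : ∀ t ∈ Set.Ioo (0:ℝ) 1,
        (δ + t * (t * (τ - δ))) ^ 2 ≤ (t * (τ - δ)) ^ 2 + r ^ 2 := by
      intro t ht
      obtain ⟨ht0, ht1⟩ := ht
      have hRpos : 0 ≤ t * (τ - δ) := by nlinarith
      obtain ⟨x, hx1, hx2⟩ := escape M hM hMne τ hreach z hδ0 t (t * (τ - δ)) ht0 ht1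
        hRpos (by nlinarith)
      obtain ⟨y, hyY, hyip⟩ := halfspace_pick _ z hcrit (x - z)
      obtain ⟨hyA, hyd⟩ := hyY
      have hyM : y ∈ M := hAM hyA
      have h1 : Metric.infDist x M ≤ dist x y := Metric.infDist_le_dist_of_mem hyM
      have h2 : dist x y ^ 2 ≤ (t * (τ - δ)) ^ 2 + r ^ 2 := by
        have hsplit : dist x y ^ 2 = ‖x - z‖ ^ 2 + 2 * ⟪x - z, z - y⟫ + ‖z - y‖ ^ 2 := by
          rw [dist_eq_norm]
          have hxy : x - y = (x - z) + (z - y) := by abel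
          rw [hxy, norm_add_sq_real]
        have hxz : ‖x - z‖ ≤ t * (τ - δ) := by rw [← dist_eq_norm]; exact hx1
        have hzy : ‖z - y‖ = r := by rw [← dist_eq_norm]; exact hyd
        rw [hsplit, hzy]
        nlinarith [norm_nonneg (x - z), hxz, hyip]
      have h3 : 0 ≤ δ + t * (t * (τ - δ)) := by nlinarith
      nlinarith [hx2, h1, h2, dist_nonneg (x := x) (y := y)]
    have hlim : τ ^ 2 ≤ (τ - δ) ^ 2 + r ^ 2 := by
      have hfc : Continuous fun t : ℝ => (δ + t * (t * (τ - δ))) ^ 2 := by continuity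
      have hgc : Continuous fun t : ℝ => (t * (τ - δ)) ^ 2 + r ^ 2 := by continuity
      have hf : Filter.Tendsto (fun t : ℝ => (δ + t * (t * (τ - δ))) ^ 2)
          (nhdsWithin 1 (Set.Iio 1)) (nhds (τ ^ 2)) := by
        have h : Filter.Tendsto (fun t : ℝ => (δ + t * (t * (τ - δ))) ^ 2)
            (nhdsWithin 1 (Set.Iio 1)) (nhds ((δ + 1 * (1 * (τ - δ))) ^ 2)) :=
          (hfc.tendsto 1).mono_left nhdsWithin_le_nhds
        have hval : (δ + 1 * (1 * (τ - δ))) ^ 2 = τ ^ 2 := by ring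
        rwa [hval] at h
      have hg : Filter.Tendsto (fun t : ℝ => (t * (τ - δ)) ^ 2 + r ^ 2)
          (nhdsWithin 1 (Set.Iio 1)) (nhds ((τ - δ) ^ 2 + r ^ 2)) := by
        have h : Filter.Tendsto (fun t : ℝ => (t * (τ - δ)) ^ 2 + r ^ 2)
            (nhdsWithin 1 (Set.Iio 1)) (nhds ((1 * (τ - δ)) ^ 2 + r ^ 2)) :=
          (hgc.tendsto 1).mono_left nhdsWithin_le_nhds
        have hval : (1 * (τ - δ)) ^ 2 + r ^ 2 = (τ - δ) ^ 2 + r ^ 2 := by ring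
        rwa [hval] at h
      refine le_of_tendsto_of_tendsto hf hg ?_
      filter_upwards [Ioo_mem_nhdsLT_of_mem
        (Set.mem_Ioc.mpr ⟨zero_lt_one, le_refl (1:ℝ)⟩)] with t ht
      exact hstep t ht
    nlinarith [hlim]
  -- final algebra
  have hεpos : 0 < ε := by
    rcases lt_or_eq_of_le hε0 with h | h
    · exact h
    · exfalso; rw [← h] at hr4; linarith
  have hgoal : δ * τ ≤ 10 * ε ^ 2 := by
    have s1 : 2 * τ * δ ≤ 16 * ε ^ 2 + 4 * ε * δ := by nlinarith [hkey, hδr, hr4, mul_le_mul_of_nonneg_left hr4 (le_of_lt hδ0), sq_nonneg (r - δ)]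
    have s2 : τ * δ ≤ 32 / 3 * ε ^ 2 := by nlinarith [s1, mul_lt_mul_of_pos_right hε hδ0]
    have s3 : δ ≤ 4 / 3 * ε := by nlinarith [s2, mul_lt_mul_of_pos_right hε hδ0, mul_pos hεpos hδ0]
    have s4 : δ ^ 2 ≤ 4 / 3 * ε * δ := by nlinarith [s3, hδ0]
    have s5 : 4 / 3 * ε * δ ≤ τ * δ / 6 := by nlinarith [mul_lt_mul_of_pos_right hε hδ0]
    nlinarith [hkey, hr4, s4, s5, mul_le_mul_of_nonneg_left hr4 (le_of_lt hδ0), sq_nonneg (r - δ)]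
  rw [le_div_iff₀ hτ]
  linarith [hgoal]
end

section
/- Let M ⊆ ℝ^D be a compact set and A ⊆ M with Hausdorff distance d_H(A,M) ≤ ε. Let z ∉ A be a critical point of d_A (i.e., z ∈ Conv(π_A(z))), let x ∈ π_M(z) and y ∈ π_A(x). Suppose M is a C² submanifold with reach τ > 0, so that the vector z − x is orthogonal to the tangent space T_x M and |⟨z − x, x − y⟩| ≤ d(z,M)·‖x − y‖²/(2τ) (Federer's quadratic bound). Then d(z,A)² ≤ d(z,M)² + ε²·(1 + d(z,M)/τ). -/
/-- Improved comparison of `d(z,A)` and `d(z,M)` for a critical point `z` of `d_A`, using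
Federer's quadratic bound for sets of reach `≥ τ`. -/
theorem stmt_16 {D : ℕ} (M A : Set (EuclideanSpace ℝ (Fin D))) (hM : IsCompact M)
    (hAM : A ⊆ M) (hAne : A.Nonempty) (ε τ : ℝ) (hτ : 0 < τ)
    (hH : Metric.hausdorffDist A M ≤ ε)
    (z x y : EuclideanSpace ℝ (Fin D)) (hzA : z ∉ A)
    (hcrit : z ∈ convexHull ℝ {w | w ∈ A ∧ dist z w = Metric.infDist z A})
    (hx : x ∈ M ∧ dist z x = Metric.infDist z M)
    (hy : y ∈ A ∧ dist x y = Metric.infDist x A)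
    (hFed : |(inner ℝ (z - x) (x - y) : ℝ)| ≤
      Metric.infDist z M * ‖x - y‖ ^ 2 / (2 * τ)) :
    Metric.infDist z A ^ 2 ≤
      Metric.infDist z M ^ 2 + ε ^ 2 * (1 + Metric.infDist z M / τ) := by
  obtain ⟨hxM, hxd⟩ := hx
  obtain ⟨hyA, hyd⟩ := hy
  have hMne : M.Nonempty := ⟨x, hxM⟩
  have hedist : EMetric.hausdorffEdist A M ≠ ⊤ :=
    Metric.hausdorffEdist_ne_top_of_nonempty_of_bounded hAne hMne
      (hM.isBounded.subset hAM) hM.isBounded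
  have hε0 : 0 ≤ ε := le_trans Metric.hausdorffDist_nonneg hH
  have hxy : ‖x - y‖ ≤ ε := by
    rw [← dist_eq_norm]
    calc dist x y = Metric.infDist x A := hyd
      _ ≤ Metric.hausdorffDist M A := Metric.infDist_le_hausdorffDist_of_mem hxM
          (by rw [Metric.hausdorffEDist_comm]; exact hedist)
      _ = Metric.hausdorffDist A M := Metric.hausdorffDist_comm ..
      _ ≤ ε := hH
  have hzM0 : 0 ≤ Metric.infDist z M := Metric.infDist_nonneg
  have h1 : Metric.infDist z A ≤ dist z y := Metric.infDist_le_dist_of_mem hyA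
  have h2 : Metric.infDist z A ^ 2 ≤ dist z y ^ 2 :=
    pow_le_pow_left₀ Metric.infDist_nonneg h1 2
  have hexp : dist z y ^ 2 = ‖z - x‖ ^ 2 + ‖x - y‖ ^ 2
      + 2 * (inner ℝ (z - x) (x - y) : ℝ) := by
    rw [dist_eq_norm]
    have hzy : z - y = (z - x) + (x - y) := by abel
    rw [hzy, norm_add_sq_real]; ring
  have hzx : ‖z - x‖ = Metric.infDist z M := by rw [← dist_eq_norm]; exact hxd
  have hinner : (inner ℝ (z - x) (x - y) : ℝ) ≤
      Metric.infDist z M * ‖x - y‖ ^ 2 / (2 * τ) := le_trans (le_abs_self _) hFed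
  have hxy2 : ‖x - y‖ ^ 2 ≤ ε ^ 2 := pow_le_pow_left₀ (norm_nonneg _) hxy 2
  have key : dist z y ^ 2 ≤ Metric.infDist z M ^ 2 + ε ^ 2 * (1 + Metric.infDist z M / τ) := by
    rw [hexp, hzx]
    have h3 : Metric.infDist z M * ‖x - y‖ ^ 2 / (2 * τ)
        ≤ Metric.infDist z M * ε ^ 2 / (2 * τ) := by
      apply div_le_div_of_nonneg_right ?_ (by linarith)
      exact mul_le_mul_of_nonneg_left hxy2 hzM0
    have h4 := le_trans hinner h3
    have h5 : Metric.infDist z M * ε ^ 2 / (2 * τ) * 2 = ε ^ 2 * (Metric.infDist z M / τ) := by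
      field_simp
    have h6 : ε ^ 2 * (1 + Metric.infDist z M / τ)
        = ε ^ 2 + ε ^ 2 * (Metric.infDist z M / τ) := by ring
    linarith [h4, hxy2]
  linarith [h2, key]
end
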